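/- Let ε, x, y, z, x̃, ỹ, z̃ be real numbers satisfying the Kahan–Hirota–Kimura discretization relations of the flow E₅: x̃ - x = ε(x ỹ + x̃ y), ỹ - y = -2ε x x̃, z̃ - z = ε(2x ỹ + 2x̃ y - y z̃ - ỹ z). Then the identity (x̃ z̃ + ỹ²)(x̃² + ỹ²)·(1 + ε y)(1 - ε y + 2ε²x²) = (x z + y²)(x² + y²)·(1 - ε ỹ)(1 + ε ỹ + 2ε²x̃²) holds. Consequently, if both sides' factors are nonzero, the Jacobian determinant of the map (x,y,z) ↦ (x̃,ỹ,z̃), which equals (1 - ε ỹ)(1 + ε ỹ + 2ε²x̃²) / ((1 + ε y)(1 - ε y + 2ε²x²)), also equals (x̃ z̃ + ỹ²)(x̃² + ỹ²) / ((x z + y²)(x² + y²)), so the map preserves the volume form Ω₅ = -2/((x z + y²)(x² + y²)) dx∧dy∧dz. -/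

import Mathlib

/-- Volume preservation for the discretization `dE₅`: the polynomial identity
`(x̃z̃+ỹ²)(x̃²+ỹ²)(1+εy)(1-εy+2ε²x²) = (xz+y²)(x²+y²)(1-εỹ)(1+εỹ+2ε²x̃²)` holds,
and consequently (when all factors are nonzero) the Jacobian determinant
`(1-εỹ)(1+εỹ+2ε²x̃²)/((1+εy)(1-εy+2ε²x²))` of the map equals
`(x̃z̃+ỹ²)(x̃²+ỹ²)/((xz+y²)(x²+y²))`, so the map preserves
`Ω₅ = -2/((xz+y²)(x²+y²)) dx∧dy∧dz`. -/
theorem dE5_volume_preservation (ε x y z x' y' z' : ℝ)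
    (h1 : x' - x = ε*(x*y' + x'*y))
    (h2 : y' - y = -2*ε*x*x')
    (h3 : z' - z = ε*(2*x*y' + 2*x'*y - y*z' - y'*z)) :
    (x'*z' + y'^2)*(x'^2 + y'^2)*((1 + ε*y)*(1 - ε*y + 2*ε^2*x^2)) =
      (x*z + y^2)*(x^2 + y^2)*((1 - ε*y')*(1 + ε*y' + 2*ε^2*x'^2)) ∧
    ((x*z + y^2)*(x^2 + y^2) ≠ 0 → (1 + ε*y)*(1 - ε*y + 2*ε^2*x^2) ≠ 0 →
      (1 - ε*y')*(1 + ε*y' + 2*ε^2*x'^2)/((1 + ε*y)*(1 - ε*y + 2*ε^2*x^2)) =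
        (x'*z' + y'^2)*(x'^2 + y'^2)/((x*z + y^2)*(x^2 + y^2))) := by
  have key : (x'*z' + y'^2)*(x'^2 + y'^2)*((1 + ε*y)*(1 - ε*y + 2*ε^2*x^2)) =
      (x*z + y^2)*(x^2 + y^2)*((1 - ε*y')*(1 + ε*y' + 2*ε^2*x'^2)) := by
    linear_combination (z*x'^2 + y^2*x' + y^2*z + x*z*x' + x*y^2 + x^2*z + 2*ε*y*x'^3 - ε*y*z*x'^2 + 3*ε*y^3*x' - ε*y^3*z - 3*ε*x*y*z*x' - ε*x*y^3 - ε*x^2*y*z - 2*ε^2*y^4*x' + 2*ε^2*x*z*x'^3 - 8*ε^2*x*y^2*x'^2 + 4*ε^2*x*y^2*z*x' - 2*ε^2*x*y^4 + 6*ε^2*x^2*z*x'^2 + 2*ε^2*x^2*y^2*x' + 2*ε^2*x^3*z*x' + 4*ε^3*x*y^3*x'^2 + 12*ε^3*x^2*y*x'^3 - 8*ε^3*x^2*y*z*x'^2 + 12*ε^3*x^2*y^3*x' + 8*ε^4*x^3*z*x'^3 - 24*ε^4*x^3*y^2*x'^2 + 16*ε^5*x^4*y*x'^3) * h1 + (y'^3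 + x'^2*y' + z*x'*y' + y*y'^2 + y*x'^2 + y*z*x' + y^2*y' + y^3 - ε*z*x'*y'^2 - ε*z*x'^3 + 2*ε*y*x'^2*y' - 2*ε*y*z*x'*y' + 2*ε*y^2*x'^2 - 2*ε*y^2*z*x' - ε*x*z*x'^2 - 2*ε*x*y*x'*y' - 3*ε*x*y^2*x' + ε*x*y^2*z + ε*x^2*z*x' + ε*x^2*y^2 + ε*x^3*z + ε^2*y*z*x'*y'^2 + ε^2*y*z*x'^3 - ε^2*y^2*y'^3 - 3*ε^2*y^2*x'^2*y' + ε^2*y^2*z*x'*y' - ε^2*y^3*y'^2 - 3*ε^2*y^3*x'^2 + ε^2*y^3*z*x' + 2*ε^2*x*z*x'^2*y' - 2*ε^2*x*y*x'*y'^2 - 4*ε^2*x*y*x'^3 + 5*ε^2*x*y*z*x'^2 - 2*ε^2*x*y^2*x'*y' + ε^2*x*y^2*z*y' + ε^2*x*y^3*x' + 2*ε^2*x^2*y'^3 + 2*ε^2*x^2*x'^2*y' + 2*ε^2*x^2*z*x'*y' + 2*ε^2*x^2*y*y'^2 + 6*ε^2*x^2*y*x'^2 - ε^2*x^2*y*z*x'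 + 3*ε^2*x^2*y^2*y' + 2*ε^2*x^2*y^3 + ε^2*x^3*z*y' + 2*ε^3*y^4*x'^2 - 2*ε^3*x*y*z*x'^2*y' + 2*ε^3*x*y^2*x'*y'^2 + 6*ε^3*x*y^2*x'^3 - 2*ε^3*x*y^2*z*x'^2 + 4*ε^3*x*y^3*x'*y' + 2*ε^3*x*y^4*x' - 2*ε^3*x^2*z*x'*y'^2 - 4*ε^3*x^2*z*x'^3 + 2*ε^3*x^2*y*y'^3 + 10*ε^3*x^2*y*x'^2*y' - 2*ε^3*x^2*y*z*x'*y' + 2*ε^3*x^2*y^2*y'^2 + 8*ε^3*x^2*y^2*x'^2 + 2*ε^3*x^2*y^3*y' + 4*ε^3*x^3*z*x'^2 - 4*ε^3*x^3*y*x'*y' - 8*ε^3*x^3*y^2*x' + 4*ε^4*x^2*y*z*x'^3 - 4*ε^4*x^2*y^2*x'^2*y' - 8*ε^4*x^2*y^3*x'^2 + 4*ε^4*x^3*z*x'^2*y' - 4*ε^4*x^3*y*x'*y'^2 - 8*ε^4*x^3*y*x'^3 - 8*ε^4*x^3*y^2*x'*y' + 8*ε^4*x^4*y*x'^2 + 8*ε^5*x^3*y^2*x'^3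 + 8*ε^5*x^4*y*x'^2*y') * h2 + (x'*y'^2 + x'^3 - ε*y*x'*y'^2 - ε*y*x'^3 + 2*ε^2*x^2*x'*y'^2 + 2*ε^2*x^2*x'^3) * h3
  refine ⟨key, fun hA hB => ?_⟩
  rw [div_eq_div_iff hB hA]
  linear_combination -key
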